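/- For t = (t₁, t₂) ∈ ℝ² with t² = t₁² + t₂², define vectors in ℝ⁵: P₁₁ = (4/(t²+1)⁴)·(4t₂(1−t²−2t₁²), 8t₁(1−t₁²), 4t₁t₂(t₁²−t₂²−3), t⁴−8t₁²t₂²+6t₂²−6t₁²+1, √3(t⁴−2t²−4t₁²+1)), P₂₂ = (4/(t²+1)⁴)·(8t₂(1−t₂²), 4t₁(1−t²−2t₂²), 4t₁t₂(t₂²−t₁²−3), 6t₂²−6t₁²+8t₁²t₂²−t⁴−1, √3(t⁴−2t²−4t₂²+1)), and P₁₂ = (4/(t²+1)⁴)·(2t₁(t²−4t₂²+1), 2t₂(t²−4t₁²+1), 8t₁²t₂²−t⁴+1, 4t₁t₂(t₁²−t₂²), −4√3·t₁t₂), where t⁴ = (t²)². Then ⟨P_{ik}, P_{jk}⟩ = (3δ_{ik}+1)·(16δ_{ij}/(t²+1)⁴) for all i,j,k ∈ {1,2}, where P_{21} = P_{12}. -/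

import Mathlib

open scoped RealInnerProductSpace

/-- `Π̄(e₁,e₁)` for the second standard immersion, in stereographic coordinates. -/
noncomputable def P11 (t₁ t₂ : ℝ) : EuclideanSpace ℝ (Fin 5) :=
  (4 / (t₁ ^ 2 + t₂ ^ 2 + 1) ^ 4) • (WithLp.equiv 2 (Fin 5 → ℝ)).symm
    ![4 * t₂ * (1 - (t₁ ^ 2 + t₂ ^ 2) - 2 * t₁ ^ 2),
      8 * t₁ * (1 - t₁ ^ 2),
      4 * t₁ * t₂ * (t₁ ^ 2 - t₂ ^ 2 - 3),
      (t₁ ^ 2 + t₂ ^ 2) ^ 2 - 8 * t₁ ^ 2 * t₂ ^ 2 + 6 * t₂ ^ 2 - 6 * t₁ ^ 2 + 1,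
      Real.sqrt 3 * ((t₁ ^ 2 + t₂ ^ 2) ^ 2 - 2 * (t₁ ^ 2 + t₂ ^ 2) - 4 * t₁ ^ 2 + 1)]

/-- `Π̄(e₂,e₂)` for the second standard immersion, in stereographic coordinates. -/
noncomputable def P22 (t₁ t₂ : ℝ) : EuclideanSpace ℝ (Fin 5) :=
  (4 / (t₁ ^ 2 + t₂ ^ 2 + 1) ^ 4) • (WithLp.equiv 2 (Fin 5 → ℝ)).symm
    ![8 * t₂ * (1 - t₂ ^ 2),
      4 * t₁ * (1 - (t₁ ^ 2 + t₂ ^ 2) - 2 * t₂ ^ 2),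
      4 * t₁ * t₂ * (t₂ ^ 2 - t₁ ^ 2 - 3),
      6 * t₂ ^ 2 - 6 * t₁ ^ 2 + 8 * t₁ ^ 2 * t₂ ^ 2 - (t₁ ^ 2 + t₂ ^ 2) ^ 2 - 1,
      Real.sqrt 3 * ((t₁ ^ 2 + t₂ ^ 2) ^ 2 - 2 * (t₁ ^ 2 + t₂ ^ 2) - 4 * t₂ ^ 2 + 1)]

/-- `Π̄(e₁,e₂)` for the second standard immersion, in stereographic coordinates. -/
noncomputable def P12 (t₁ t₂ : ℝ) : EuclideanSpace ℝ (Fin 5) :=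
  (4 / (t₁ ^ 2 + t₂ ^ 2 + 1) ^ 4) • (WithLp.equiv 2 (Fin 5 → ℝ)).symm
    ![2 * t₁ * ((t₁ ^ 2 + t₂ ^ 2) - 4 * t₂ ^ 2 + 1),
      2 * t₂ * ((t₁ ^ 2 + t₂ ^ 2) - 4 * t₁ ^ 2 + 1),
      8 * t₁ ^ 2 * t₂ ^ 2 - (t₁ ^ 2 + t₂ ^ 2) ^ 2 + 1,
      4 * t₁ * t₂ * (t₁ ^ 2 - t₂ ^ 2),
      -4 * Real.sqrt 3 * t₁ * t₂]



/-- The matrix of second fundamental form vectors. -/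
noncomputable def Pmat (t₁ t₂ : ℝ) : Fin 2 → Fin 2 → EuclideanSpace ℝ (Fin 5) :=
  fun i j =>
    if i = 0 then (if j = 0 then P11 t₁ t₂ else P12 t₁ t₂)
    else (if j = 0 then P12 t₁ t₂ else P22 t₁ t₂)


section helpers
private lemma sqrt3_sq : Real.sqrt 3 ^ 2 = 3 := Real.sq_sqrt (by norm_num)

private lemma inn1111 (t₁ t₂ : ℝ) : ⟪P11 t₁ t₂, P11 t₁ t₂⟫ = 64 / (t₁ ^ 2 + t₂ ^ 2 + 1) ^ 4 := by
  have hD : (t₁ ^ 2 + t₂ ^ 2 + 1) ≠ 0 := by positivity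
  simp only [P11, PiLp.inner_apply, WithLp.equiv_symm_apply, PiLp.toLp_apply, PiLp.smul_apply, Pi.smul_apply, smul_eq_mul,
    RCLike.inner_apply, conj_trivial, Fin.sum_univ_five, Matrix.cons_val_zero,
    Matrix.cons_val_one, Matrix.head_cons, Matrix.cons_val_two, Matrix.tail_cons,
    Matrix.cons_val_three, Matrix.cons_val_four]
  field_simp
  ring_nf
  rw [sqrt3_sq]
  ring

private lemma inn2222 (t₁ t₂ : ℝ) : ⟪P22 t₁ t₂, P22 t₁ t₂⟫ = 64 / (t₁ ^ 2 + t₂ ^ 2 + 1) ^ 4 := by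
  have hD : (t₁ ^ 2 + t₂ ^ 2 + 1) ≠ 0 := by positivity
  simp only [P22, PiLp.inner_apply, WithLp.equiv_symm_apply, PiLp.toLp_apply, PiLp.smul_apply, Pi.smul_apply, smul_eq_mul,
    RCLike.inner_apply, conj_trivial, Fin.sum_univ_five, Matrix.cons_val_zero,
    Matrix.cons_val_one, Matrix.head_cons, Matrix.cons_val_two, Matrix.tail_cons,
    Matrix.cons_val_three, Matrix.cons_val_four]
  field_simp
  ring_nf
  rw [sqrt3_sq]
  ring

private lemma inn1212 (t₁ t₂ : ℝ) : ⟪P12 t₁ t₂, P12 t₁ t₂⟫ = 16 / (t₁ ^ 2 + t₂ ^ 2 + 1) ^ 4 := by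
  have hD : (t₁ ^ 2 + t₂ ^ 2 + 1) ≠ 0 := by positivity
  simp only [P12, PiLp.inner_apply, WithLp.equiv_symm_apply, PiLp.toLp_apply, PiLp.smul_apply, Pi.smul_apply, smul_eq_mul,
    RCLike.inner_apply, conj_trivial, Fin.sum_univ_five, Matrix.cons_val_zero,
    Matrix.cons_val_one, Matrix.head_cons, Matrix.cons_val_two, Matrix.tail_cons,
    Matrix.cons_val_three, Matrix.cons_val_four]
  field_simp
  ring_nf
  rw [sqrt3_sq]
  ring

private lemma inn1112 (t₁ t₂ : ℝ) : ⟪P11 t₁ t₂, P12 t₁ t₂⟫ = 0 := by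
  have hD : (t₁ ^ 2 + t₂ ^ 2 + 1) ≠ 0 := by positivity
  simp only [P11, P12, PiLp.inner_apply, WithLp.equiv_symm_apply, PiLp.toLp_apply, PiLp.smul_apply, Pi.smul_apply, smul_eq_mul,
    RCLike.inner_apply, conj_trivial, Fin.sum_univ_five, Matrix.cons_val_zero,
    Matrix.cons_val_one, Matrix.head_cons, Matrix.cons_val_two, Matrix.tail_cons,
    Matrix.cons_val_three, Matrix.cons_val_four]
  field_simp
  ring_nf
  rw [sqrt3_sq]
  ring

private lemma inn1222 (t₁ t₂ : ℝ) : ⟪P12 t₁ t₂, P22 t₁ t₂⟫ = 0 := by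
  have hD : (t₁ ^ 2 + t₂ ^ 2 + 1) ≠ 0 := by positivity
  simp only [P12, P22, PiLp.inner_apply, WithLp.equiv_symm_apply, PiLp.toLp_apply, PiLp.smul_apply, Pi.smul_apply, smul_eq_mul,
    RCLike.inner_apply, conj_trivial, Fin.sum_univ_five, Matrix.cons_val_zero,
    Matrix.cons_val_one, Matrix.head_cons, Matrix.cons_val_two, Matrix.tail_cons,
    Matrix.cons_val_three, Matrix.cons_val_four]
  field_simp
  ring_nf
  rw [sqrt3_sq]
  ring
private lemma inn1211 (t₁ t₂ : ℝ) : ⟪P12 t₁ t₂, P11 t₁ t₂⟫ = 0 := by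
  rw [real_inner_comm]; exact inn1112 t₁ t₂

private lemma inn2212 (t₁ t₂ : ℝ) : ⟪P22 t₁ t₂, P12 t₁ t₂⟫ = 0 := by
  rw [real_inner_comm]; exact inn1222 t₁ t₂
end helpers

/-- `⟨P_{ik}, P_{jk}⟩ = (3δ_{ik} + 1) · 16 δ_{ij} / (t² + 1)⁴` for all `i, j, k`. -/
theorem stmt14 (t₁ t₂ : ℝ) (i j k : Fin 2) :
    ⟪Pmat t₁ t₂ i k, Pmat t₁ t₂ j k⟫
      = (3 * (if i = k then (1 : ℝ) else 0) + 1) *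
        (16 * (if i = j then (1 : ℝ) else 0) / (t₁ ^ 2 + t₂ ^ 2 + 1) ^ 4) := by
  have e0 : ((0 : Fin 2) = 0) = True := by simp
  have e1 : ((1 : Fin 2) = 0) = False := by simp
  have e01 : ((0 : Fin 2) = 1) = False := by simp
  have e11 : ((1 : Fin 2) = 1) = True := by simp
  fin_cases i <;> fin_cases j <;> fin_cases k <;>
    simp only [Pmat, Fin.zero_eta, Fin.mk_one, Fin.isValue, e0, e1, e01, e11,
      if_true, if_false] <;>
    rw [show ∀ a b : EuclideanSpace ℝ (Fin 5), (inner ℝ a b : ℝ) = ⟪ a, b ⟫ from fun _ _ => rfl] <;>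
    first
    | (rw [inn1111]; ring) | (rw [inn2222]; ring) | (rw [inn1212]; ring)
    | (rw [inn1112]; ring) | (rw [inn1222]; ring)
    | (rw [inn1211]; ring) | (rw [inn2212]; ring)
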